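/- Let N = 4m where m ≡ 7 (mod 12) is a positive integer all of whose prime divisors are congruent to 1 or 7 mod 12. Then the number of pairs of coprime integers (p,q) with N = p² + 12q², 4 | p, and 3 ∤ p is exactly 2^{τ(N)}, where τ(N) is the number of distinct prime divisors of N. -/

import Mathlib

/-- Eisenstein integers: `a + b ω` with `ω` a primitive cube root of unity. -/
structure Eis where
  a : ℤ
  b : ℤ
deriving DecidableEq

namespace Eis

@[ext] theorem ext' : ∀ {x y : Eis}, x.a = y.a → x.b = y.b → x = y
  | ⟨_, _⟩, ⟨_, _⟩, rfl, rfl => rfl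

instance : Zero Eis := ⟨⟨0, 0⟩⟩
instance : One Eis := ⟨⟨1, 0⟩⟩
instance : Add Eis := ⟨fun x y => ⟨x.a + y.a, x.b + y.b⟩⟩
instance : Neg Eis := ⟨fun x => ⟨-x.a, -x.b⟩⟩
instance : Mul Eis := ⟨fun x y => ⟨x.a * y.a - x.b * y.b, x.a * y.b + x.b * y.a - x.b * y.b⟩⟩

@[simp] theorem zero_a : (0 : Eis).a = 0 := rfl
@[simp] theorem zero_b : (0 : Eis).b = 0 := rfl
@[simp] theorem one_a : (1 : Eis).a = 1 := rfl
@[simp] theorem one_b : (1 : Eis).b = 0 := rfl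
@[simp] theorem add_a (x y : Eis) : (x + y).a = x.a + y.a := rfl
@[simp] theorem add_b (x y : Eis) : (x + y).b = x.b + y.b := rfl
@[simp] theorem neg_a (x : Eis) : (-x).a = -x.a := rfl
@[simp] theorem neg_b (x : Eis) : (-x).b = -x.b := rfl
@[simp] theorem mul_a (x y : Eis) : (x * y).a = x.a * y.a - x.b * y.b := rfl
@[simp] theorem mul_b (x y : Eis) : (x * y).b = x.a * y.b + x.b * y.a - x.b * y.b := rfl

instance commRing : CommRing Eis where
  add := (· + ·)
  zero := 0
  neg := Neg.neg
  mul := (· * ·)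
  one := 1
  add_assoc := by intros; ext <;> simp <;> ring
  zero_add := by intros; ext <;> simp
  add_zero := by intros; ext <;> simp
  add_comm := by intros; ext <;> simp <;> ring
  neg_add_cancel := by intros; ext <;> simp
  mul_assoc := by intros; ext <;> simp <;> ring
  one_mul := by intros; ext <;> simp
  mul_one := by intros; ext <;> simp
  left_distrib := by intros; ext <;> simp <;> ring
  right_distrib := by intros; ext <;> simp <;> ring
  mul_comm := by intros; ext <;> simp <;> ring
  zero_mul := by intros; ext <;> simp
  mul_zero := by intros; ext <;> simp
  zsmul := zsmulRec
  nsmul := nsmulRec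

end Eis
namespace Eis

/-- Norm of an Eisenstein integer. -/
def nrm (x : Eis) : ℤ := x.a ^ 2 - x.a * x.b + x.b ^ 2

theorem nrm_def (x : Eis) : nrm x = x.a ^ 2 - x.a * x.b + x.b ^ 2 := rfl

@[simp] theorem nrm_mul (x y : Eis) : nrm (x * y) = nrm x * nrm y := by
  simp only [nrm_def, mul_a, mul_b]; ring

@[simp] theorem nrm_one : nrm 1 = 1 := by simp [nrm_def]
@[simp] theorem nrm_zero : nrm 0 = 0 := by simp [nrm_def]

theorem nrm_nonneg (x : Eis) : 0 ≤ nrm x := by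
  have := sq_nonneg (2 * x.a - x.b); have := sq_nonneg x.b; simp only [nrm_def]; nlinarith

theorem nrm_eq_zero {x : Eis} : nrm x = 0 ↔ x = 0 := by
  constructor
  · intro h
    have h1 := sq_nonneg (2 * x.a - x.b); have h2 := sq_nonneg x.b
    have ha : x.b = 0 := by simp only [nrm_def] at h; nlinarith
    have : x.a = 0 := by simp only [nrm_def, ha] at h; nlinarith
    ext <;> simp [this, ha]
  · rintro rfl; simp

/-- Conjugation. -/
def conj (x : Eis) : Eis := ⟨x.a - x.b, -x.b⟩

@[simp] theorem conj_a (x : Eis) : (conj x).a = x.a - x.b := rfl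
@[simp] theorem conj_b (x : Eis) : (conj x).b = -x.b := rfl

@[simp] theorem conj_mul (x y : Eis) : conj (x * y) = conj x * conj y := by
  ext <;> simp <;> ring

@[simp] theorem conj_conj (x : Eis) : conj (conj x) = x := by ext <;> simp

@[simp] theorem nrm_conj (x : Eis) : nrm (conj x) = nrm x := by simp [nrm_def]; ring

@[simp] theorem natCast_a (n : ℕ) : (n : Eis).a = n := by
  induction n with
  | zero => rfl
  | succ k ih => rw [Nat.cast_succ]; simp [ih]

@[simp] theorem natCast_b (n : ℕ) : (n : Eis).b = 0 := by
  induction n with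
  | zero => rfl
  | succ k ih => rw [Nat.cast_succ]; simp [ih]

@[simp] theorem intCast_a (n : ℤ) : (n : Eis).a = n := by
  cases n with
  | ofNat k => simpa using natCast_a k
  | negSucc k => rw [Int.cast_negSucc]; simp [Int.negSucc_eq]

@[simp] theorem intCast_b (n : ℤ) : (n : Eis).b = 0 := by
  cases n with
  | ofNat k => simpa using natCast_b k
  | negSucc k => rw [Int.cast_negSucc]; simp

theorem mul_conj (x : Eis) : x * conj x = ((nrm x : ℤ) : Eis) := by
  ext <;> simp only [mul_a, mul_b, conj_a, conj_b, intCast_a, intCast_b, nrm_def] <;> ring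

@[simp] theorem nrm_intCast (n : ℤ) : nrm (n : Eis) = n ^ 2 := by
  simp [nrm_def, intCast_a, intCast_b]

@[simp] theorem nrm_natCast (n : ℕ) : nrm (n : Eis) = (n : ℤ) ^ 2 := by
  simp [nrm_def]

instance : Nontrivial Eis := ⟨⟨0, 1, by decide⟩⟩

instance : NoZeroDivisors Eis := by
  constructor
  intro x y h
  have : nrm x * nrm y = 0 := by rw [← nrm_mul, h, nrm_zero]
  rcases mul_eq_zero.1 this with h | h
  · exact Or.inl (nrm_eq_zero.1 h)
  · exact Or.inr (nrm_eq_zero.1 h)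

instance : IsDomain Eis := NoZeroDivisors.to_isDomain Eis

theorem isUnit_of_nrm_eq_one {x : Eis} (h : nrm x = 1) : IsUnit x :=
  IsUnit.of_mul_eq_one (conj x) (by rw [mul_conj, h]; norm_cast)

theorem nrm_eq_one_of_isUnit {x : Eis} (h : IsUnit x) : nrm x = 1 := by
  rcases h with ⟨u, rfl⟩
  have : nrm (u : Eis) * nrm ((u⁻¹ : Eisˣ) : Eis) = 1 := by
    rw [← nrm_mul]; simp
  have h1 := nrm_nonneg (u : Eis)
  have h2 := nrm_nonneg ((u⁻¹ : Eisˣ) : Eis)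
  rcases Int.mul_eq_one_iff_eq_one_or_neg_one.1 this with ⟨h, _⟩ | ⟨h, _⟩
  · exact h
  · omega

end Eis
namespace Eis

@[simp] theorem sub_a (x y : Eis) : (x - y).a = x.a - y.a := by
  rw [sub_eq_add_neg, sub_eq_add_neg]; simp
@[simp] theorem sub_b (x y : Eis) : (x - y).b = x.b - y.b := by
  rw [sub_eq_add_neg, sub_eq_add_neg]; simp

noncomputable instance : Div Eis :=
  ⟨fun x y =>
    let w := x * conj y
    let n := nrm y
    ⟨round ((w.a : ℚ) / (n : ℚ)), round ((w.b : ℚ) / (n : ℚ))⟩⟩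

theorem div_def (x y : Eis) : x / y =
    ⟨round (((x * conj y).a : ℚ) / (nrm y : ℚ)), round (((x * conj y).b : ℚ) / (nrm y : ℚ))⟩ :=
  rfl

noncomputable instance : Mod Eis := ⟨fun x y => x - y * (x / y)⟩

theorem mod_def (x y : Eis) : x % y = x - y * (x / y) := rfl

theorem nrm_mod_lt (x : Eis) {y : Eis} (hy : y ≠ 0) : nrm (x % y) < nrm y := by
  have hn0 : nrm y ≠ 0 := fun h => hy (nrm_eq_zero.1 h)
  have hn : 0 < nrm y := lt_of_le_of_ne (nrm_nonneg y) (Ne.symm hn0)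
  set w := x * conj y with hw
  set q := x / y with hq
  set r := x % y with hr
  have key : conj y * r = w - (nrm y : Eis) * q := by
    rw [hr, mod_def, ← hq, mul_sub, mul_comm (conj y) x, ← hw, ← mul_assoc,
      mul_comm (conj y) y, mul_conj]
  have ha : (conj y * r).a = w.a - nrm y * q.a := by rw [key]; simp
  have hb : (conj y * r).b = w.b - nrm y * q.b := by rw [key]; simp
  have hnrm : nrm y * nrm r = (w.a - nrm y * q.a) ^ 2 - (w.a - nrm y * q.a) * (w.b - nrm y * q.b)
      + (w.b - nrm y * q.b) ^ 2 := by
    have h2 := nrm_mul (conj y) r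
    rw [nrm_conj] at h2
    rw [← h2, nrm_def, ha, hb]
  set S : ℚ := (w.a : ℚ) / (nrm y : ℚ) - (q.a : ℚ) with hS
  set T : ℚ := (w.b : ℚ) / (nrm y : ℚ) - (q.b : ℚ) with hT
  have hqa : |S| ≤ 1 / 2 := by rw [hS, hq, div_def]; exact abs_sub_round _
  have hqb : |T| ≤ 1 / 2 := by rw [hT, hq, div_def]; exact abs_sub_round _
  rw [abs_le] at hqa hqb
  have hnq : (0 : ℚ) < ((nrm y : ℤ) : ℚ) := by exact_mod_cast hn
  have hnne : ((nrm y : ℤ) : ℚ) ≠ 0 := ne_of_gt hnq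
  have e1 : ((w.a : ℚ) - (nrm y : ℚ) * (q.a : ℚ)) = (nrm y : ℚ) * S := by
    rw [hS]; field_simp
  have e2 : ((w.b : ℚ) - (nrm y : ℚ) * (q.b : ℚ)) = (nrm y : ℚ) * T := by
    rw [hT]; field_simp
  have hcast : ((nrm y : ℤ) : ℚ) * ((nrm r : ℤ) : ℚ) =
      ((nrm y : ℚ) * S) ^ 2 - ((nrm y : ℚ) * S) * ((nrm y : ℚ) * T) + ((nrm y : ℚ) * T) ^ 2 := by
    rw [← e1, ← e2]
    exact_mod_cast congrArg (fun z : ℤ => (z : ℚ)) hnrm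
  have h34 : S ^ 2 - S * T + T ^ 2 ≤ 3 / 4 := by
    nlinarith [hqa.1, hqa.2, hqb.1, hqb.2, sq_nonneg (S + T), sq_nonneg (S - T)]
  have hfin : ((nrm r : ℤ) : ℚ) < ((nrm y : ℤ) : ℚ) := by
    have hnn : (0:ℚ) < ((nrm y : ℤ) : ℚ) * ((nrm y : ℤ) : ℚ) := mul_pos hnq hnq
    have : ((nrm y : ℤ) : ℚ) * ((nrm r : ℤ) : ℚ) ≤
        3 / 4 * (((nrm y : ℤ) : ℚ) * ((nrm y : ℤ) : ℚ)) := by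
      rw [hcast]; nlinarith
    nlinarith
  exact_mod_cast hfin

theorem natAbs_nrm_mod_lt (x : Eis) {y : Eis} (hy : y ≠ 0) :
    (nrm (x % y)).natAbs < (nrm y).natAbs := by
  have h1 := nrm_mod_lt x hy
  have h2 := nrm_nonneg (x % y)
  have h3 := nrm_nonneg y
  omega

theorem nrm_le_nrm_mul_left (x : Eis) {y : Eis} (hy : y ≠ 0) :
    (nrm x).natAbs ≤ (nrm (x * y)).natAbs := by
  rw [nrm_mul, Int.natAbs_mul]
  have h0 := nrm_nonneg y
  have h1 : nrm y ≠ 0 := fun h => hy (nrm_eq_zero.1 h)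
  exact Nat.le_mul_of_pos_right _ (by omega)

noncomputable instance : EuclideanDomain Eis :=
  { Eis.commRing, (inferInstance : Nontrivial Eis) with
    quotient := (· / ·)
    remainder := (· % ·)
    quotient_zero := fun x => by
      show x / 0 = 0
      rw [div_def]
      ext <;> simp [nrm_def]
    quotient_mul_add_remainder_eq := fun x y => by
      show y * (x / y) + x % y = x
      rw [mod_def]; ring
    r := fun x y => (nrm x).natAbs < (nrm y).natAbs
    r_wellFounded := (measure fun x : Eis => (nrm x).natAbs).wf
    remainder_lt := fun x y hy => natAbs_nrm_mod_lt x hy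
    mul_left_not_lt := fun a b hb0 => not_lt_of_ge <| nrm_le_nrm_mul_left a hb0 }

theorem prime_of_nrm_prime {π : Eis} (h : Prime (nrm π)) : Prime π := by
  have hirr : Irreducible π := by
    constructor
    · intro hu
      rw [nrm_eq_one_of_isUnit hu] at h
      exact h.not_unit isUnit_one
    · intro u v huv
      have hmul : nrm π = nrm u * nrm v := by rw [huv, nrm_mul]
      rcases h.irreducible.isUnit_or_isUnit hmul with hu | hv
      · left
        apply isUnit_of_nrm_eq_one
        rcases Int.isUnit_iff.1 hu with h1 | h1
        · exact h1
        · have := nrm_nonneg u; omega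
      · right
        apply isUnit_of_nrm_eq_one
        rcases Int.isUnit_iff.1 hv with h1 | h1
        · exact h1
        · have := nrm_nonneg v; omega
  exact hirr.prime

end Eis
namespace Eis

theorem intCast_dvd (n : ℤ) (x : Eis) : (n : Eis) ∣ x ↔ n ∣ x.a ∧ n ∣ x.b := by
  constructor
  · rintro ⟨y, rfl⟩
    constructor
    · exact ⟨y.a, by simp⟩
    · exact ⟨y.b, by simp⟩
  · rintro ⟨⟨u, hu⟩, ⟨v, hv⟩⟩
    exact ⟨⟨u, v⟩, by ext <;> simp [hu, hv]⟩

theorem nrm_dvd_nrm {x y : Eis} (h : x ∣ y) : nrm x ∣ nrm y := by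
  rcases h with ⟨z, rfl⟩; exact ⟨nrm z, by rw [nrm_mul]⟩

/-- An Eisenstein integer is primitive if no rational prime divides it. -/
def Primitive (x : Eis) : Prop := ∀ q : ℕ, q.Prime → ¬ ((q : Eis) ∣ x)

theorem conj_dvd_conj {x y : Eis} (h : x ∣ y) : conj x ∣ conj y := by
  rcases h with ⟨z, rfl⟩; exact ⟨conj z, by rw [conj_mul]⟩

@[simp] theorem conj_intCast (n : ℤ) : conj (n : Eis) = n := by ext <;> simp

@[simp] theorem conj_natCast (n : ℕ) : conj (n : Eis) = n := by ext <;> simp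

theorem natCast_dvd (n : ℕ) (x : Eis) : (n : Eis) ∣ x ↔ (n : ℤ) ∣ x.a ∧ (n : ℤ) ∣ x.b := by
  have : ((n : ℤ) : Eis) = (n : Eis) := by push_cast; rfl
  rw [← this, intCast_dvd]

theorem exists_prime_nrm {p : ℕ} (hp : p.Prime) (h3 : p % 3 = 1) :
    ∃ π : Eis, nrm π = p ∧ Prime π := by
  have hp2 : p ≠ 2 := by omega
  have hp3 : p ≠ 3 := by omega
  haveI : Fact p.Prime := ⟨hp⟩
  -- find a square root of -3 mod p
  have hsq : ∃ z : ZMod p, z ^ 2 = -3 := by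
    obtain ⟨g, hg⟩ := IsCyclic.exists_ofOrder_eq_natCard (α := (ZMod p)ˣ)
    have hcard : Nat.card (ZMod p)ˣ = p - 1 := by
      rw [Nat.card_eq_fintype_card, ZMod.card_units_eq_totient, Nat.totient_prime hp]
    have h3dvd : 3 ∣ p - 1 := by omega
    set ζ : (ZMod p)ˣ := g ^ ((p - 1) / 3) with hζ
    have hord : orderOf ζ = 3 := by
      have hp2le := hp.two_le
      have hne : p - 1 ≠ 0 := by omega
      rw [hζ, orderOf_pow, hg, hcard, Nat.gcd_eq_right (Nat.div_dvd_of_dvd h3dvd),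
        Nat.div_div_self h3dvd hne]
    have hζ3 : (ζ : ZMod p) ^ 3 = 1 := by
      have h := pow_orderOf_eq_one ζ
      rw [hord] at h
      rw [← Units.val_pow_eq_pow_val, h, Units.val_one]
    have hζ1 : (ζ : ZMod p) ≠ 1 := by
      intro h
      have : ζ = 1 := Units.ext h
      rw [this, orderOf_one] at hord
      omega
    have hsum : (ζ : ZMod p) ^ 2 + (ζ : ZMod p) + 1 = 0 := by
      have hfac : ((ζ : ZMod p) - 1) * ((ζ : ZMod p) ^ 2 + (ζ : ZMod p) + 1) = 0 := by
        have : (ζ : ZMod p) ^ 3 - 1 = 0 := by rw [hζ3]; ring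
        rw [← this]; ring
      rcases mul_eq_zero.1 hfac with h | h
      · exact absurd (by linear_combination h) hζ1
      · exact h
    exact ⟨2 * (ζ : ZMod p) + 1, by linear_combination 4 * hsum⟩
  obtain ⟨z, hz⟩ := hsq
  set c : ℤ := (z.val : ℤ) with hc
  have hdvd : (p : ℤ) ∣ c ^ 2 + 3 := by
    rw [← ZMod.intCast_zmod_eq_zero_iff_dvd]
    push_cast
    rw [hc]
    push_cast [ZMod.intCast_cast, ZMod.natCast_val, ZMod.cast_id]
    rw [hz]; ring
  set δ : Eis := ⟨c + 1, 2⟩ with hδ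
  have hnδ : nrm δ = c ^ 2 + 3 := by rw [hδ, nrm_def]; ring
  -- p is not prime in Eis
  have hnotprime : ¬ Prime ((p : ℕ) : Eis) := by
    intro hPrime
    have hdvd2 : ((p : ℕ) : Eis) ∣ δ * conj δ := by
      rw [mul_conj, hnδ]
      obtain ⟨t, ht⟩ := hdvd
      exact ⟨(t : Eis), by rw [ht]; push_cast; ring⟩
    rcases hPrime.2.2 _ _ hdvd2 with h | h
    · rw [natCast_dvd] at h
      have : (p : ℤ) ∣ 2 := by simpa [hδ] using h.2
      have := Int.le_of_dvd (by norm_num) this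
      have : (2:ℤ) ≤ p := by exact_mod_cast hp.two_le
      omega
    · rw [natCast_dvd] at h
      have : (p : ℤ) ∣ -2 := by simpa [hδ] using h.2
      have := Int.le_of_dvd (by norm_num) ((dvd_neg).1 this)
      have : (2:ℤ) ≤ p := by exact_mod_cast hp.two_le
      omega
  have hnotunit : ¬ IsUnit ((p : ℕ) : Eis) := by
    intro hu
    have := nrm_eq_one_of_isUnit hu
    rw [nrm_natCast] at this
    have : (2:ℤ) ≤ p := by exact_mod_cast hp.two_le
    nlinarith
  have hnotirr : ¬ Irreducible ((p : ℕ) : Eis) := fun h => hnotprime h.prime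
  rw [irreducible_iff] at hnotirr
  push_neg at hnotirr
  obtain ⟨u, v, huv, hu, hv⟩ := hnotirr hnotunit
  have hnrmuv : (nrm u).natAbs * (nrm v).natAbs = p ^ 2 := by
    have : nrm u * nrm v = (p:ℤ) ^ 2 := by rw [← nrm_mul, ← huv, nrm_natCast]
    rw [← Int.natAbs_mul, this]
    simp [Int.natAbs_pow]
  have hune : (nrm u).natAbs ≠ 1 := by
    intro h1
    apply hu
    apply isUnit_of_nrm_eq_one
    have := nrm_nonneg u
    omega
  have hvne : (nrm v).natAbs ≠ 1 := by
    intro h1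
    apply hv
    apply isUnit_of_nrm_eq_one
    have := nrm_nonneg v
    omega
  have := (hp.mul_eq_prime_sq_iff hune hvne).1 hnrmuv
  refine ⟨u, ?_, ?_⟩
  · have := this.1
    have h4 := nrm_nonneg u
    omega
  · apply prime_of_nrm_prime
    have h4 := nrm_nonneg u
    have : nrm u = p := by have := this.1; omega
    rw [this]
    exact Nat.prime_iff_prime_int.mp hp

end Eis
namespace Eis

theorem not_dvd_conj_self {p : ℕ} (hp : p.Prime) (h3 : p % 3 = 1) {π : Eis}
    (hπn : nrm π = p) (hπ : Prime π) : ¬ π ∣ conj π := by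
  intro h
  have hsub : π - conj π = (π.b : Eis) * ⟨1, 2⟩ := by
    ext <;> simp <;> ring
  have hd : π ∣ (π.b : Eis) * ⟨1, 2⟩ := hsub ▸ dvd_sub dvd_rfl h
  rcases hπ.2.2 _ _ hd with h1 | h1
  · -- π ∣ b
    have hb : (p : ℤ) ∣ π.b := by
      have := nrm_dvd_nrm h1
      rw [hπn, nrm_intCast] at this
      exact (Nat.prime_iff_prime_int.mp hp).dvd_of_dvd_pow this
    have ha : (p : ℤ) ∣ π.a := by
      have h2 : π ∣ (π.a : Eis) := by
        have hdd : π ∣ (π.b : Eis) * ⟨0, 1⟩ := Dvd.dvd.mul_right h1 _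
        have : (π.a : Eis) = π - (π.b : Eis) * ⟨0, 1⟩ := by ext <;> simp
        rw [this]
        exact dvd_sub dvd_rfl hdd
      have := nrm_dvd_nrm h2
      rw [hπn, nrm_intCast] at this
      exact (Nat.prime_iff_prime_int.mp hp).dvd_of_dvd_pow this
    have hsq : (p : ℤ) ^ 2 ∣ nrm π := by
      obtain ⟨s, hs⟩ := ha
      obtain ⟨t, ht⟩ := hb
      exact ⟨s ^ 2 - s * t + t ^ 2, by rw [nrm_def, hs, ht]; ring⟩
    rw [hπn] at hsq
    have hple := Int.le_of_dvd (by exact_mod_cast hp.pos) hsq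
    have : (2 : ℤ) ≤ p := by exact_mod_cast hp.two_le
    nlinarith
  · -- π ∣ 1 + 2ω, norm 3
    have := nrm_dvd_nrm h1
    rw [hπn] at this
    have h3' : nrm (⟨1, 2⟩ : Eis) = 3 := by rw [nrm_def]; ring
    rw [h3'] at this
    have hple := Int.le_of_dvd (by norm_num) this
    have h2le : (2 : ℤ) ≤ p := by exact_mod_cast hp.two_le
    have hpeq : p = 2 ∨ p = 3 := by omega
    rcases hpeq with h | h <;> omega

theorem mul_conj_eq_p {p : ℕ} {π : Eis} (hπn : nrm π = p) : π * conj π = (p : Eis) := by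
  rw [mul_conj, hπn]; push_cast; rfl

/-- Dividing a primitive element by the full power of `π` or `conj π`. -/
theorem divide_pow {p : ℕ} (hp : p.Prime) (k : ℤ) (hk : ¬ ((p : ℤ) ∣ k)) :
    ∀ e : ℕ, ∀ π : Eis, nrm π = p → Prime π → ∀ α : Eis, Primitive α →
      nrm α = (p : ℤ) ^ e * k →
      ∃ β : Eis, (α = π ^ e * β ∨ α = (conj π) ^ e * β) ∧ Primitive β ∧ nrm β = k := by
  intro e
  induction e with
  | zero =>
    intro π hπn hπ α hα hn
    exact ⟨α, Or.inl (by simp), hα, by simpa using hn⟩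
  | succ e ih =>
    intro π hπn hπ α hα hn
    have hπc : Prime (conj π) := prime_of_nrm_prime (by rw [nrm_conj, hπn]; exact_mod_cast Nat.prime_iff_prime_int.mp hp)
    have hsplit : π ∣ α ∨ conj π ∣ α := by
      have hpd : (p : Eis) ∣ α * conj α := by
        rw [mul_conj, hn]
        refine ⟨((p:ℤ)^e * k : ℤ), ?_⟩
        push_cast
        ring
      have : π ∣ α * conj α := (mul_conj_eq_p hπn ▸ Dvd.intro (conj π) rfl).trans hpd
      rcases hπ.2.2 _ _ this with h | h
      · exact Or.inl h
      · exact Or.inr (by simpa using conj_dvd_conj h)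
    -- common inner argument
    have inner : ∀ π' : Eis, nrm π' = p → Prime π' → π' ∣ α →
        ∃ β : Eis, α = π' ^ (e + 1) * β ∧ Primitive β ∧ nrm β = k := by
      intro π' hπ'n hπ' hdvd
      obtain ⟨γ, hγ⟩ := hdvd
      have hγprim : Primitive γ := by
        intro q hq hqd
        exact hα q hq (hγ ▸ Dvd.dvd.mul_left hqd π')
      have hγn : nrm γ = (p : ℤ) ^ e * k := by
        have h1 : nrm π' * nrm γ = (p : ℤ) ^ (e + 1) * k := by rw [← nrm_mul, ← hγ, hn]
        rw [hπ'n] at h1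
        have hp0 : (p : ℤ) ≠ 0 := by exact_mod_cast hp.pos.ne'
        have : (p : ℤ) * nrm γ = (p : ℤ) * ((p : ℤ) ^ e * k) := by rw [h1]; ring
        exact mul_left_cancel₀ hp0 this
      obtain ⟨β, hcase, hβprim, hβn⟩ := ih π' hπ'n hπ' γ hγprim hγn
      rcases hcase with h | h
      · exact ⟨β, by rw [hγ, h, pow_succ]; ring, hβprim, hβn⟩
      · rcases Nat.eq_zero_or_pos e with he | he
        · subst he
          exact ⟨β, by rw [hγ, h]; simp [pow_one], hβprim, hβn⟩
        · exfalso
          obtain ⟨e', rfl⟩ := Nat.exists_eq_succ_of_ne_zero he.ne'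
          have : (p : Eis) ∣ α := by
            refine ⟨(conj π') ^ e' * β, ?_⟩
            rw [hγ, h, ← mul_conj_eq_p hπ'n, pow_succ]
            ring
          exact hα p hp this
    rcases hsplit with h | h
    · obtain ⟨β, h1, h2, h3⟩ := inner π hπn hπ h
      exact ⟨β, Or.inl h1, h2, h3⟩
    · obtain ⟨β, h1, h2, h3⟩ := inner (conj π) (by rw [nrm_conj, hπn]) hπc h
      exact ⟨β, Or.inr h1, h2, h3⟩

end Eis
namespace Eis

/-- Primitive elements of given norm. -/
def reps (m : ℕ) : Set Eis := {α | nrm α = (m : ℤ) ∧ Primitive α}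

theorem reps_finite (m : ℕ) : (reps m).Finite := by
  have hsub : reps m ⊆ (fun α : Eis => (α.a, α.b)) ⁻¹'
      (Set.Icc ((-(2 * m : ℤ), -(2 * m : ℤ))) ((2 * m : ℤ), (2 * m : ℤ))) := by
    rintro α ⟨hn, -⟩
    have h2 : 2 * (m : ℤ) = (α.a - α.b) ^ 2 + α.a ^ 2 + α.b ^ 2 := by
      rw [← hn, nrm_def]; ring
    have h1 : α.a ^ 2 ≤ 2 * (m : ℤ) := by nlinarith [sq_nonneg (α.a - α.b), sq_nonneg α.b]
    have h2' : α.b ^ 2 ≤ 2 * (m : ℤ) := by nlinarith [sq_nonneg (α.a - α.b), sq_nonneg α.a]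
    have hm0 : (0 : ℤ) ≤ m := Int.natCast_nonneg m
    constructor
    · constructor <;> simp only [] <;> nlinarith
    · constructor <;> simp only [] <;> nlinarith
  exact Set.Finite.subset (Set.Finite.preimage
    (Function.Injective.injOn (fun x y h => by
      ext
      · exact congrArg Prod.fst h
      · exact congrArg Prod.snd h)) (Set.finite_Icc _ _)) hsub

theorem primitive_of_nrm_one {α : Eis} (h : nrm α = 1) : Primitive α := by
  intro q hq hqd
  have := nrm_dvd_nrm hqd
  rw [h, nrm_natCast] at this
  have hle := Int.le_of_dvd (by norm_num) this
  have : (2 : ℤ) ≤ q := by exact_mod_cast hq.two_le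
  nlinarith

theorem reps_one : reps 1 = ↑({⟨1,0⟩, ⟨-1,0⟩, ⟨0,1⟩, ⟨0,-1⟩, ⟨1,1⟩, ⟨-1,-1⟩} : Finset Eis) := by
  ext α
  simp only [reps, Set.mem_setOf_eq, Finset.coe_insert, Set.mem_insert_iff,
    Finset.coe_singleton, Set.mem_singleton_iff]
  constructor
  · rintro ⟨hn, -⟩
    rw [nrm_def] at hn
    push_cast at hn
    have h4 : (2 * α.a - α.b) ^ 2 + 3 * α.b ^ 2 = 4 := by nlinarith
    have hb1 : -1 ≤ α.b := by nlinarith [sq_nonneg (2 * α.a - α.b)]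
    have hb2 : α.b ≤ 1 := by nlinarith [sq_nonneg (2 * α.a - α.b)]
    interval_cases hb : α.b
    · -- b = -1
      have : (α.a + 1) * α.a = 0 := by nlinarith
      rcases mul_eq_zero.1 this with h | h
      · right; right; right; right; right; ext <;> simp <;> omega
      · right; right; right; left; ext <;> simp <;> omega
    · -- b = 0
      have : (α.a - 1) * (α.a + 1) = 0 := by nlinarith
      rcases mul_eq_zero.1 this with h | h
      · left; ext <;> simp <;> omega
      · right; left; ext <;> simp <;> omega
    · -- b = 1
      have : α.a * (α.a - 1) = 0 := by nlinarith
      rcases mul_eq_zero.1 this with h | h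
      · right; right; left; ext <;> simp <;> omega
      · right; right; right; right; left; ext <;> simp <;> omega
  · intro h
    have hn : nrm α = 1 := by
      rcases h with h | h | h | h | h | h <;> subst h <;> rw [nrm_def] <;> norm_num
    exact ⟨by rw [hn]; norm_num, primitive_of_nrm_one hn⟩

theorem ncard_reps_one : (reps 1).ncard = 6 := by
  rw [reps_one, Set.ncard_coe_finset]
  rfl

theorem nrm_pow (x : Eis) (e : ℕ) : nrm (x ^ e) = nrm x ^ e := by
  induction e with
  | zero => simp
  | succ n ihn => rw [pow_succ, pow_succ, nrm_mul, ihn]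

theorem prim_mul_pow {p k : ℕ} (hp : p.Prime) (h3 : p % 3 = 1) (hk : ¬ p ∣ k)
    {π : Eis} (hπn : nrm π = p) (hπ : Prime π) (e : ℕ) {β : Eis}
    (hβ : Primitive β) (hβn : nrm β = (k : ℤ)) : Primitive (π ^ e * β) := by
  intro q hq hqd
  have hπc : Prime (conj π) := prime_of_nrm_prime
    (by rw [nrm_conj, hπn]; exact_mod_cast Nat.prime_iff_prime_int.mp hp)
  by_cases hqp : q = p
  · subst hqp
    have h1 : conj π ∣ π ^ e * β := by
      rw [← mul_conj_eq_p hπn] at hqd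
      exact (Dvd.intro_left π rfl).trans hqd
    rcases hπc.2.2 _ _ h1 with h | h
    · have := hπc.dvd_of_dvd_pow h
      exact not_dvd_conj_self hp h3 hπn (prime_of_nrm_prime (by rw [hπn]; exact_mod_cast Nat.prime_iff_prime_int.mp hp)) (by simpa using conj_dvd_conj this)
    · have := nrm_dvd_nrm h
      rw [nrm_conj, hπn, hβn] at this
      exact hk (by exact_mod_cast this)
  · have hcop : IsCoprime ((q : ℤ) : Eis) ((p : ℤ) : Eis) := by
      apply IsCoprime.map (R := ℤ) _ (Int.castRingHom Eis)
      rw [Int.isCoprime_iff_gcd_eq_one]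
      exact_mod_cast (Nat.coprime_primes hq hp).2 hqp
    have hcop2 : IsCoprime ((q : ℤ) : Eis) (π ^ e) := by
      apply IsCoprime.of_isCoprime_of_dvd_right (hcop.pow_right (n := e))
      have : π ∣ ((p : ℤ) : Eis) := by
        push_cast
        exact (mul_conj_eq_p hπn) ▸ Dvd.intro (conj π) rfl
      exact pow_dvd_pow_of_dvd this e
    have : ((q : ℤ) : Eis) ∣ π ^ e * β := by push_cast; exact_mod_cast hqd
    exact hβ q hq (by exact_mod_cast hcop2.dvd_of_dvd_mul_left this)

theorem count_reps : ∀ m : ℕ, 0 < m →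
    (∀ q : ℕ, q.Prime → q ∣ m → q % 12 = 1 ∨ q % 12 = 7) →
    (reps m).ncard = 6 * 2 ^ m.primeFactors.card := by
  intro m
  induction m using Nat.strong_induction_on with
  | _ m ih =>
    intro hm0 hdiv
    rcases eq_or_ne m 1 with rfl | hm1
    · simpa using ncard_reps_one
    -- decompose m = p^e * k
    have hp : m.minFac.Prime := Nat.minFac_prime hm1
    set p := m.minFac with hpdef
    have hpm : p ∣ m := Nat.minFac_dvd m
    have hp3 : p % 3 = 1 := by
      rcases hdiv p hp hpm with h | h <;> omega
    set e := m.factorization p with hedef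
    set k := m / p ^ e with hkdef
    have hksplit : p ^ e * k = m := Nat.ordProj_mul_ordCompl_eq_self m p
    have hpk : ¬ p ∣ k := Nat.not_dvd_ordCompl hp hm0.ne'
    have he1 : 1 ≤ e := (Nat.Prime.factorization_pos_of_dvd hp hm0.ne' hpm)
    have hk0 : 0 < k := Nat.ordCompl_pos p hm0.ne'
    have hklt : k < m := by
      have hpe : 2 ≤ p ^ e := by
        calc 2 ≤ p := hp.two_le
        _ = p ^ 1 := (pow_one p).symm
        _ ≤ p ^ e := Nat.pow_le_pow_right hp.pos he1
      nlinarith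
    have hkdiv : ∀ q : ℕ, q.Prime → q ∣ k → q % 12 = 1 ∨ q % 12 = 7 := by
      intro q hq hqk
      exact hdiv q hq (hqk.trans (Nat.ordCompl_dvd m p))
    have hkcount := ih k hklt hk0 hkdiv
    obtain ⟨π, hπn, hπ⟩ := exists_prime_nrm hp hp3
    have hπc : Prime (conj π) := prime_of_nrm_prime
      (by rw [nrm_conj, hπn]; exact_mod_cast Nat.prime_iff_prime_int.mp hp)
    have hπcn : nrm (conj π) = (p : ℤ) := by rw [nrm_conj, hπn]
    have hpkZ : ¬ ((p : ℤ) ∣ (k : ℤ)) := by exact_mod_cast hpk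
    -- set equality
    have hset : reps m = (fun β => π ^ e * β) '' reps k ∪
        (fun β => (conj π) ^ e * β) '' reps k := by
      ext α
      constructor
      · rintro ⟨hn, hprim⟩
        have hnα : nrm α = (p : ℤ) ^ e * (k : ℤ) := by
          rw [hn, ← hksplit]; push_cast; ring
        obtain ⟨β, hcase, hβprim, hβn⟩ := divide_pow hp (k : ℤ) hpkZ e π hπn hπ α hprim hnα
        rcases hcase with h | h
        · exact Or.inl ⟨β, ⟨hβn, hβprim⟩, h.symm⟩
        · exact Or.inr ⟨β, ⟨hβn, hβprim⟩, h.symm⟩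
      · rintro (⟨β, ⟨hβn, hβprim⟩, rfl⟩ | ⟨β, ⟨hβn, hβprim⟩, rfl⟩)
        · refine ⟨?_, prim_mul_pow hp hp3 hpk hπn hπ e hβprim hβn⟩
          rw [nrm_mul, nrm_pow, hπn, hβn, ← hksplit]
          push_cast; ring
        · refine ⟨?_, prim_mul_pow hp hp3 hpk hπcn hπc e hβprim ?_⟩
          · rw [nrm_mul, nrm_pow, hπcn, hβn, ← hksplit]
            push_cast; ring
          · exact hβn
    -- disjointness
    have hdisj : Disjoint ((fun β => π ^ e * β) '' reps k)
        ((fun β => (conj π) ^ e * β) '' reps k) := by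
      rw [Set.disjoint_left]
      rintro α ⟨β, hβ, rfl⟩ ⟨γ, hγ, hγeq⟩
      have hprim : Primitive (π ^ e * β) := prim_mul_pow hp hp3 hpk hπn hπ e hβ.2 hβ.1
      have hd1 : π ∣ π ^ e * β := Dvd.dvd.mul_right (dvd_pow_self π (by omega)) β
      have hγeq' : (conj π) ^ e * γ = π ^ e * β := hγeq
      have hd2 : conj π ∣ π ^ e * β := by
        rw [← hγeq']; exact Dvd.dvd.mul_right (dvd_pow_self (conj π) (by omega)) γ
      obtain ⟨δ, hδ⟩ := hd2
      have hd3 : π ∣ δ := by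
        have : π ∣ conj π * δ := hδ ▸ hd1
        rcases hπ.2.2 _ _ this with h | h
        · exact absurd h (not_dvd_conj_self hp hp3 hπn hπ)
        · exact h
      obtain ⟨ε, hε⟩ := hd3
      have : (p : Eis) ∣ π ^ e * β := by
        refine ⟨ε, ?_⟩
        rw [hδ, hε, ← mul_conj_eq_p hπn]
        ring
      exact hprim p hp this
    -- cardinalities
    have hinj1 : Function.Injective (fun β : Eis => π ^ e * β) :=
      fun x y h => mul_left_cancel₀ (pow_ne_zero e hπ.ne_zero) h
    have hinj2 : Function.Injective (fun β : Eis => (conj π) ^ e * β) :=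
      fun x y h => mul_left_cancel₀ (pow_ne_zero e hπc.ne_zero) h
    have hfin := reps_finite k
    rw [hset, Set.ncard_union_eq hdisj (hfin.image _) (hfin.image _),
      Set.ncard_image_of_injective _ hinj1, Set.ncard_image_of_injective _ hinj2, hkcount]
    -- prime factor count
    have hpf : m.primeFactors.card = k.primeFactors.card + 1 := by
      have h1 : m.primeFactors = (p ^ e * k).primeFactors := by rw [hksplit]
      rw [h1, Nat.primeFactors_mul (pow_ne_zero e hp.pos.ne') hk0.ne',
        Nat.primeFactors_pow p (by omega : e ≠ 0), Nat.Prime.primeFactors hp]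
      have hnotmem : p ∉ k.primeFactors := fun h => hpk (Nat.dvd_of_mem_primeFactors h)
      have : ({p} : Finset ℕ) ∪ k.primeFactors = insert p k.primeFactors := by
        ext x; simp [or_comm]
      rw [this, Finset.card_insert_of_notMem hnotmem]
    rw [hpf]
    ring

end Eis
namespace Eis

def omg : Eis := ⟨0, 1⟩

theorem omg_sq : omg * omg = ⟨-1, -1⟩ := by ext <;> simp [omg]
theorem omg_cube : omg * omg * omg = 1 := by ext <;> simp [omg]

theorem omg_mul_b (α : Eis) : (omg * α).b = α.a - α.b := by simp [omg]
theorem omg_sq_mul_b (α : Eis) : (omg * (omg * α)).b = -α.a := by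
  rw [← mul_assoc, omg_sq]; simp
theorem omg_sq_mul_a (α : Eis) : (omg * (omg * α)).a = α.b - α.a := by
  rw [← mul_assoc, omg_sq]; simp; ring

theorem prim_omg_mul {α : Eis} (h : Primitive α) : Primitive (omg * α) := by
  intro q hq hqd
  apply h q hq
  have : (q : Eis) ∣ omg * omg * (omg * α) := Dvd.dvd.mul_left hqd (omg * omg)
  rwa [show omg * omg * (omg * α) = omg * omg * omg * α by ring, omg_cube, one_mul] at this

theorem nrm_omg : nrm omg = 1 := by simp [omg, nrm_def]

/-- Elements of `reps m` with even second coordinate. -/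
def repsE (m : ℕ) : Set Eis := {α | α ∈ reps m ∧ α.b % 2 = 0}

theorem omg_mul_mem_reps {m : ℕ} {α : Eis} (h : α ∈ reps m) : omg * α ∈ reps m :=
  ⟨by rw [nrm_mul, nrm_omg, one_mul]; exact h.1, prim_omg_mul h.2⟩

theorem count_repsE (m : ℕ) (hm0 : 0 < m)
    (hdiv : ∀ q : ℕ, q.Prime → q ∣ m → q % 12 = 1 ∨ q % 12 = 7) :
    (repsE m).ncard = 2 ^ (m.primeFactors.card + 1) := by
  classical
  set E := repsE m with hE
  set E1 := (fun α => omg * α) '' E with hE1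
  set E2 := (fun α => omg * (omg * α)) '' E with hE2
  have homg3 : ∀ α : Eis, omg * (omg * (omg * α)) = α := by
    intro α
    rw [show omg * (omg * (omg * α)) = omg * omg * omg * α by ring, omg_cube, one_mul]
  -- parity trichotomy for primitive elements
  have hpar : ∀ α : Eis, α ∈ reps m → ¬(α.a % 2 = 0 ∧ α.b % 2 = 0) := by
    rintro α ⟨-, hprim⟩ ⟨ha, hb⟩
    exact hprim 2 Nat.prime_two ((natCast_dvd 2 α).2 ⟨Int.dvd_of_emod_eq_zero ha,
      Int.dvd_of_emod_eq_zero hb⟩)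
  have hmem1 : ∀ α : Eis, α ∈ E1 ↔ α ∈ reps m ∧ α.a % 2 = 0 := by
    intro α
    constructor
    · rintro ⟨β, ⟨hβ, hβb⟩, rfl⟩
      refine ⟨omg_mul_mem_reps hβ, ?_⟩
      show (omg * β).a % 2 = 0
      have : (omg * β).a = -β.b := by simp [omg]
      omega
    · rintro ⟨hα, ha⟩
      refine ⟨omg * (omg * α), ⟨omg_mul_mem_reps (omg_mul_mem_reps hα), ?_⟩, homg3 α⟩
      have := omg_sq_mul_b α
      omega
  have hmem2 : ∀ α : Eis, α ∈ E2 ↔ α ∈ reps m ∧ (α.a - α.b) % 2 = 0 := by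
    intro α
    constructor
    · rintro ⟨β, ⟨hβ, hβb⟩, rfl⟩
      refine ⟨omg_mul_mem_reps (omg_mul_mem_reps hβ), ?_⟩
      show ((omg * (omg * β)).a - (omg * (omg * β)).b) % 2 = 0
      have h1 := omg_sq_mul_a β
      have h2 := omg_sq_mul_b β
      omega
    · rintro ⟨hα, hab⟩
      refine ⟨omg * α, ⟨omg_mul_mem_reps hα, ?_⟩, homg3 α⟩
      have := omg_mul_b α
      omega
  have hsplit : reps m = E ∪ E1 ∪ E2 := by
    ext α
    constructor
    · intro hα
      have htri := hpar α hα
      by_cases hb : α.b % 2 = 0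
      · exact Or.inl (Or.inl ⟨hα, hb⟩)
      · by_cases ha : α.a % 2 = 0
        · exact Or.inl (Or.inr ((hmem1 α).2 ⟨hα, ha⟩))
        · exact Or.inr ((hmem2 α).2 ⟨hα, by omega⟩)
    · rintro ((h | h) | h)
      · exact h.1
      · exact ((hmem1 α).1 h).1
      · exact ((hmem2 α).1 h).1
  have hdisj01 : Disjoint E E1 := by
    rw [Set.disjoint_left]
    rintro α ⟨hα, hb⟩ h1
    have := ((hmem1 α).1 h1).2
    exact hpar α hα ⟨this, hb⟩
  have hdisj02 : Disjoint (E ∪ E1) E2 := by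
    rw [Set.disjoint_left]
    rintro α (⟨hα, hb⟩ | h1) h2
    · have := ((hmem2 α).1 h2).2
      exact hpar α hα ⟨by omega, hb⟩
    · obtain ⟨hα, ha⟩ := (hmem1 α).1 h1
      have := ((hmem2 α).1 h2).2
      exact hpar α hα ⟨ha, by omega⟩
  have hEfin : E.Finite := (reps_finite m).subset (fun α hα => hα.1)
  have hinj : Function.Injective (fun α : Eis => omg * α) := by
    intro x y h
    have : omg * (omg * (omg * x)) = omg * (omg * (omg * y)) := by
      simp only at h; rw [h]
    rwa [homg3, homg3] at this
  have hcard1 : E1.ncard = E.ncard := Set.ncard_image_of_injective _ hinj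
  have hcard2 : E2.ncard = E.ncard := by
    rw [hE2]
    have : (fun α : Eis => omg * (omg * α)) = (fun α : Eis => omg * α) ∘ (fun α : Eis => omg * α) := rfl
    rw [this, Set.image_comp]
    rw [Set.ncard_image_of_injective _ hinj, Set.ncard_image_of_injective _ hinj]
  have htotal := count_reps m hm0 hdiv
  have hfin1 : E1.Finite := hEfin.image _
  have hfin2 : E2.Finite := hEfin.image _
  rw [hsplit, Set.ncard_union_eq hdisj02 (hEfin.union hfin1) hfin2,
    Set.ncard_union_eq hdisj01 hEfin hfin1] at htotal
  rw [hcard1, hcard2] at htotal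
  have : E.ncard * 3 = 6 * 2 ^ m.primeFactors.card := by omega
  have h2 : E.ncard = 2 * 2 ^ m.primeFactors.card := by omega
  rw [hE, h2, pow_succ]
  ring

end Eis
theorem stmt_9 (m N : ℕ) (hN : N = 4 * m) (hm : 0 < m) (h7 : m % 12 = 7)
    (hdiv : ∀ p : ℕ, p.Prime → p ∣ m → p % 12 = 1 ∨ p % 12 = 7) :
    {pq : ℤ × ℤ | IsCoprime pq.1 pq.2 ∧ (N : ℤ) = pq.1 ^ 2 + 12 * pq.2 ^ 2 ∧
        4 ∣ pq.1 ∧ ¬ (3 ∣ pq.1)}.ncard = 2 ^ N.primeFactors.card := by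
  classical
  set S := {pq : ℤ × ℤ | IsCoprime pq.1 pq.2 ∧ (N : ℤ) = pq.1 ^ 2 + 12 * pq.2 ^ 2 ∧
      4 ∣ pq.1 ∧ ¬ (3 ∣ pq.1)} with hS
  -- parity facts about m
  have hm4 : m % 4 = 3 := by omega
  have hm3 : m % 3 = 1 := by omega
  have hm2 : m % 2 = 1 := by omega
  -- the map from repsE m to S
  set Φ : Eis → ℤ × ℤ := fun α => (2 * α.a - α.b, α.b / 2) with hΦ
  -- key parity lemma: for α with nrm α = m, a - b/2 is even and b/2 odd
  have key : ∀ x y : ℤ, (m : ℤ) = x ^ 2 + 3 * y ^ 2 → x % 2 = 0 ∧ y % 2 = 1 := by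
    intro x y hxy
    have hmod : ((m : ℤ)) % 4 = 3 := by omega
    rcases Int.even_or_odd x with ⟨u, hu⟩ | ⟨u, hu⟩ <;>
      rcases Int.even_or_odd y with ⟨v, hv⟩ | ⟨v, hv⟩
    · exfalso
      obtain ⟨K, hK⟩ : ∃ K : ℤ, (m : ℤ) = 4 * K := ⟨u ^ 2 + 3 * v ^ 2, by rw [hxy, hu, hv]; ring⟩
      omega
    · constructor <;> omega
    · exfalso
      obtain ⟨K, hK⟩ : ∃ K : ℤ, (m : ℤ) = 4 * K + 1 := ⟨u ^ 2 + u + 3 * v ^ 2, by rw [hxy, hu, hv]; ring⟩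
      omega
    · exfalso
      obtain ⟨K, hK⟩ : ∃ K : ℤ, (m : ℤ) = 4 * K := ⟨u ^ 2 + u + 3 * v ^ 2 + 3 * v + 1, by rw [hxy, hu, hv]; ring⟩
      omega
  have himg : Φ '' Eis.repsE m = S := by
    ext ⟨p, q⟩
    constructor
    · rintro ⟨α, ⟨⟨hn, hprim⟩, hb⟩, heq⟩
      obtain ⟨y, hy⟩ : ∃ y, α.b = 2 * y := ⟨α.b / 2, by omega⟩
      obtain ⟨x, hx⟩ : ∃ x : ℤ, x = α.a - y := ⟨_, rfl⟩
      have hmx : (m : ℤ) = x ^ 2 + 3 * y ^ 2 := by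
        rw [← hn, Eis.nrm_def, hx, hy]; ring
      obtain ⟨hxe, hyo⟩ := key x y hmx
      have hfst : p = 2 * x := by
        have h := congrArg Prod.fst heq
        simp only [hΦ] at h
        omega
      have hsnd : q = y := by
        have h := congrArg Prod.snd heq
        simp only [hΦ] at h
        omega
      refine ⟨?_, ?_, ?_, ?_⟩
      · -- coprime
        show IsCoprime p q
        rw [hfst, hsnd, Int.isCoprime_iff_gcd_eq_one]
        by_contra hne
        obtain ⟨r, hr, hrdvd⟩ := Nat.exists_prime_and_dvd hne
        have hrx : (r : ℤ) ∣ 2 * x := (Int.natCast_dvd_natCast.2 hrdvd).trans (Int.gcd_dvd_left _ _)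
        have hry : (r : ℤ) ∣ y := (Int.natCast_dvd_natCast.2 hrdvd).trans (Int.gcd_dvd_right _ _)
        rcases eq_or_ne r 2 with rfl | hr2
        · obtain ⟨t, ht⟩ := hry; omega
        · have hrodd : (r : ℤ) ∣ x := by
            have hcop : IsCoprime (r : ℤ) 2 := by
              rw [Int.isCoprime_iff_gcd_eq_one]
              have : Nat.Coprime r 2 := (Nat.coprime_primes hr Nat.prime_two).2 hr2
              simpa [Int.gcd] using this
            exact hcop.dvd_of_dvd_mul_left hrx
          apply hprim r hr
          rw [Eis.natCast_dvd]
          constructor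
          · have h' : α.a = x + y := by omega
            rw [h']; exact dvd_add hrodd hry
          · rw [hy]; exact Dvd.dvd.mul_left hry 2
      · -- norm equation
        show (N : ℤ) = p ^ 2 + 12 * q ^ 2
        have hNm : (N : ℤ) = 4 * (m : ℤ) := by exact_mod_cast congrArg (fun t : ℕ => (t : ℤ)) hN
        rw [hfst, hsnd, hNm, hmx]; ring
      · show (4 : ℤ) ∣ p
        rw [hfst]; omega
      · show ¬ (3 : ℤ) ∣ p
        rw [hfst]
        intro h3
        have h3x : (3 : ℤ) ∣ x := by omega
        obtain ⟨t, ht⟩ := h3x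
        obtain ⟨K, hK⟩ : ∃ K : ℤ, (m : ℤ) = 3 * K := ⟨3 * t ^ 2 + y ^ 2, by rw [hmx, ht]; ring⟩
        omega
    · rintro ⟨hcop, hnorm, hdvd4, hndvd3⟩
      simp only [hS, Set.mem_setOf_eq] at hcop hnorm hdvd4 hndvd3
      obtain ⟨t, ht⟩ := hdvd4
      set x : ℤ := 2 * t with hxdef
      have hp2x : p = 2 * x := by omega
      set α : Eis := ⟨x + q, 2 * q⟩ with hα
      have hmx : (m : ℤ) = x ^ 2 + 3 * q ^ 2 := by
        have hNm : (N : ℤ) = 4 * (m : ℤ) := by exact_mod_cast congrArg (fun t : ℕ => (t : ℤ)) hN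
        rw [hNm, hp2x] at hnorm
        nlinarith
      have hnα : Eis.nrm α = (m : ℤ) := by
        rw [Eis.nrm_def]
        show (x + q) ^ 2 - (x + q) * (2 * q) + (2 * q) ^ 2 = (m : ℤ)
        rw [hmx]; ring
      have hgcd : Int.gcd p q = 1 := Int.isCoprime_iff_gcd_eq_one.mp hcop
      have hprim : Eis.Primitive α := by
        intro r hr hrd
        rw [Eis.natCast_dvd] at hrd
        obtain ⟨hra, hrb⟩ := hrd
        simp only [hα] at hra hrb
        rcases eq_or_ne r 2 with rfl | hr2
        · -- 2 | x + q and x even imply 2 | q, 2 | p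
          have h2q : (2 : ℤ) ∣ q := by omega
          have h2p : (2 : ℤ) ∣ p := by omega
          have : (2 : ℤ) ∣ Int.gcd p q := Int.dvd_coe_gcd h2p h2q
          rw [hgcd] at this
          norm_num at this
        · have hrq : (r : ℤ) ∣ q := by
            have hcop2 : IsCoprime (r : ℤ) 2 := by
              rw [Int.isCoprime_iff_gcd_eq_one]
              have : Nat.Coprime r 2 := (Nat.coprime_primes hr Nat.prime_two).2 hr2
              simpa [Int.gcd] using this
            exact hcop2.dvd_of_dvd_mul_left hrb
          have hrp : (r : ℤ) ∣ p := by
            have hrx : (r : ℤ) ∣ x := by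
              have := dvd_sub hra hrq
              simpa using this
            rw [hp2x]; exact Dvd.dvd.mul_left hrx 2
          have : (r : ℤ) ∣ Int.gcd p q := Int.dvd_coe_gcd hrp hrq
          rw [hgcd] at this
          have := Int.le_of_dvd (by norm_num) this
          have := hr.two_le
          omega
      refine ⟨α, ⟨⟨hnα, hprim⟩, ?_⟩, ?_⟩
      · show (2 * q) % 2 = 0
        omega
      · show (2 * (x + q) - 2 * q, 2 * q / 2) = (p, q)
        rw [Prod.mk.injEq]
        constructor <;> omega
  have hinj : Set.InjOn Φ (Eis.repsE m) := by
    rintro α ⟨-, hαb⟩ β ⟨-, hβb⟩ heq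
    simp only [hΦ, Prod.mk.injEq] at heq
    obtain ⟨h1, h2⟩ := heq
    ext <;> omega
  have hcount := Eis.count_repsE m hm hdiv
  have hcardS : S.ncard = 2 ^ (m.primeFactors.card + 1) := by
    rw [← himg, Set.ncard_image_of_injOn hinj, hcount]
  have hNpf : N.primeFactors.card = m.primeFactors.card + 1 := by
    have h4 : Nat.primeFactors 4 = {2} := by
      have : (4 : ℕ) = 2 ^ 2 := by norm_num
      rw [this, Nat.primeFactors_pow 2 (by norm_num), Nat.Prime.primeFactors Nat.prime_two]
    have h2nm : 2 ∉ m.primeFactors := by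
      intro h
      have := Nat.dvd_of_mem_primeFactors h
      omega
    have : N.primeFactors = insert 2 m.primeFactors := by
      rw [hN, Nat.primeFactors_mul (by norm_num) hm.ne', h4]
      ext x
      simp
    rw [this, Finset.card_insert_of_notMem h2nm]
  rw [hNpf]
  exact hcardS
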